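/- Let d ≥ 3 and n_1,...,n_d ≥ 2 be integers and let M be the number of edges of Grid(n_1,...,n_{d-1}). Let g̃ be a Q_{d-1}-magic edge labeling of Grid(n_1,...,n_{d-1}) with magic sum S'. Define g on edges e = {x,y} of Grid(n_1,...,n_d) with y_i = x_i+1 for some i ≤ d-1 (all other coordinates equal), writing ẽ = {(x_1,...,x_{d-1}),(y_1,...,y_{d-1})}: if d is odd, g(e) = g̃(ẽ) + (x_d-1)M if i is odd and g(e) = g̃(ẽ) + (n_d-x_d)M if i is even; if d is even, then for i ≤ d-2, g(e) = g̃(ẽ) + (x_d-1)M if i is odd and g(e) = g̃(ẽ) + (n_d-x_d)M if i is even, and for i = d-1, g(e) = g̃(ẽ) + (x_d-1)M if x_1+⋯+x_{d-2} is odd and g(e) = g̃(ẽ) + (n_d-x_d)M if x_1+⋯+x_{d-2} is even. Then for every (x_1,...,x_d) ∈ [n_1-1]×⋯×[n_d-1] and every ε ∈ {0,1}: the sum of g(e) over the (d-1)2^{d-2} edges of the subcube {(x_1+ε_1,...,x_d+ε_d) : ε ∈ {0,1}^d} of Grid(n_1,...,n_d) both of whose endpoints have last coordinate x_d + ε equals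 S' + (d-1)2^{d-3}(n_d-1)M. -/

import Mathlib

/-- The grid graph `Grid(n 0, …, n (d-1))`: vertices are tuples whose `i`-th coordinate
ranges over a set of size `n i` (we use `Fin (n i) = {0, …, n i - 1}`, corresponding to the
coordinate `[n i] = {1, …, n i}` via `v ↦ v + 1`); two vertices are adjacent iff they differ
by exactly one in one coordinate and agree in all others. -/
def gridGraph {d : ℕ} (n : Fin d → ℕ) : SimpleGraph (∀ i, Fin (n i)) where
  Adj x y := ∃ i, ((x i : ℕ) + 1 = (y i : ℕ) ∨ (y i : ℕ) + 1 = (x i : ℕ)) ∧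
    ∀ j, j ≠ i → x j = y j
  symm := by
    constructor
    rintro x y ⟨i, h, hj⟩
    exact ⟨i, h.symm, fun j hji => (hj j hji).symm⟩
  loopless := by
    constructor
    rintro x ⟨i, h, -⟩
    rcases h with h | h <;> omega

/-- `f` is an `H`-magic vertex labeling of `G` with `H`-magic sum `c`:
a bijection from the vertices of `G` onto `{1, …, |V|}` such that the vertex labels of every
subgraph of `G` isomorphic to `H` sum to `c`. -/
def IsMagicVertexLabeling {V : Type*} [Fintype V] {W : Type*}
    (G : SimpleGraph V) (H : SimpleGraph W) (f : V → ℤ) (c : ℤ) : Prop :=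
  Set.BijOn f Set.univ (Set.Icc 1 (Fintype.card V : ℤ)) ∧
  ∀ G' : G.Subgraph, Nonempty (G'.coe ≃g H) → ∑ᶠ v ∈ G'.verts, f v = c

/-- `g` is an `H`-magic edge labeling of `G` with `H`-magic sum `c`:
a bijection from the edges of `G` onto `{1, …, |E|}` such that the edge labels of every
subgraph of `G` isomorphic to `H` sum to `c`. -/
def IsMagicEdgeLabeling {V : Type*} [Fintype V] {W : Type*}
    (G : SimpleGraph V) (H : SimpleGraph W) (g : Sym2 V → ℤ) (c : ℤ) : Prop :=
  Set.BijOn g G.edgeSet (Set.Icc 1 (G.edgeSet.ncard : ℤ)) ∧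
  ∀ G' : G.Subgraph, Nonempty (G'.coe ≃g H) → ∑ᶠ e ∈ G'.edgeSet, g e = c

/-- `G` admits an `H`-covering: every edge of `G` belongs to at least one subgraph of `G`
isomorphic to `H`. -/
def AdmitsCovering {V W : Type*} (G : SimpleGraph V) (H : SimpleGraph W) : Prop :=
  ∀ e ∈ G.edgeSet, ∃ G' : G.Subgraph, e ∈ G'.edgeSet ∧ Nonempty (G'.coe ≃g H)

/-- `(Fv, Fe)` is an `H`-supermagic labeling of `G` with `H`-supermagic sum `c`:
the vertex part is a bijection onto `{1, …, |V|}`, the edge part is a bijection from the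
edges onto `{|V|+1, …, |V|+|E|}` (together a bijection `V ∪ E → {1, …, |V|+|E|}` mapping `V`
onto `{1, …, |V|}`), and the labels of every subgraph isomorphic to `H` sum to `c`. -/
def IsSupermagicLabeling {V : Type*} [Fintype V] {W : Type*}
    (G : SimpleGraph V) (H : SimpleGraph W) (Fv : V → ℤ) (Fe : Sym2 V → ℤ) (c : ℤ) : Prop :=
  Set.BijOn Fv Set.univ (Set.Icc 1 (Fintype.card V : ℤ)) ∧
  Set.BijOn Fe G.edgeSet
    (Set.Icc ((Fintype.card V : ℤ) + 1) ((Fintype.card V : ℤ) + (G.edgeSet.ncard : ℤ))) ∧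
  ∀ G' : G.Subgraph, Nonempty (G'.coe ≃g H) →
    (∑ᶠ v ∈ G'.verts, Fv v) + (∑ᶠ e ∈ G'.edgeSet, Fe e) = c

/-- `G` is `H`-supermagic with `H`-supermagic sum `c`. -/
def IsSupermagic {V : Type*} [Fintype V] {W : Type*}
    (G : SimpleGraph V) (H : SimpleGraph W) (c : ℤ) : Prop :=
  AdmitsCovering G H ∧ ∃ Fv Fe, IsSupermagicLabeling G H Fv Fe c

/-- The embedding of the index set `Fin (d-1)` (the first `d-1` coordinates) into `Fin d`. -/
def restrIdx (d : ℕ) : Fin (d - 1) → Fin d := Fin.castLE (Nat.sub_le d 1)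

/-- The index of the last coordinate in `Fin d` (for `d ≥ 1`). -/
def lastIdx (d : ℕ) (hd : 1 ≤ d) : Fin d := ⟨d - 1, by omega⟩

/-- Restriction of a grid vertex to its first `d-1` coordinates: a vertex of the
`(d-1)`-dimensional grid `Grid(n 0, …, n (d-2))`. -/
def restrict {d : ℕ} {n : Fin d → ℕ} (x : ∀ i, Fin (n i)) :
    ∀ i : Fin (d - 1), Fin (n (restrIdx d i)) := fun i => x (restrIdx d i)

section CubeAux

variable {m : ℕ} {V : Type*}

lemma differ_one_iff (η μ : Fin m → Bool) :
    (∃ (i : Fin m) (η₀ : Fin m → Bool), η₀ i = false ∧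
      ((η = η₀ ∧ μ = Function.update η₀ i true) ∨ (μ = η₀ ∧ η = Function.update η₀ i true))) ↔
    ∃ i : Fin m, η i ≠ μ i ∧ ∀ j, j ≠ i → η j = μ j := by
  constructor
  · rintro ⟨i, η₀, hf, ⟨rfl, rfl⟩ | ⟨rfl, rfl⟩⟩ <;>
      exact ⟨i, by simp [hf], fun j hj => by simp [Function.update_of_ne hj]⟩
  · rintro ⟨i, hne, hj⟩
    cases hη : η i with
    | false =>
        refine ⟨i, η, hη, Or.inl ⟨rfl, funext fun j => ?_⟩⟩
        rcases eq_or_ne j i with rfl | h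
        · rw [Function.update_self]
          rw [hη] at hne
          cases h' : μ j
          · exact absurd h'.symm hne
          · rfl
        · rw [Function.update_of_ne h]
          exact (hj j h).symm
    | true =>
        have hμ : μ i = false := by
          cases h' : μ i
          · rfl
          · rw [hη, h'] at hne; exact absurd rfl hne
        refine ⟨i, μ, hμ, Or.inr ⟨rfl, funext fun j => ?_⟩⟩
        rcases eq_or_ne j i with rfl | h
        · rw [Function.update_self, hη]
        · rw [Function.update_of_ne h]
          exact hj j h

def cubeSubgraph (G : SimpleGraph V) (w : (Fin m → Bool) → V)
    (hadj : ∀ (η : Fin m → Bool) (i : Fin m), η i = false →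
      G.Adj (w η) (w (Function.update η i true))) : G.Subgraph where
  verts := Set.range w
  Adj a b := ∃ (i : Fin m) (η : Fin m → Bool), η i = false ∧
    ((a = w η ∧ b = w (Function.update η i true)) ∨
     (b = w η ∧ a = w (Function.update η i true)))
  adj_sub := by
    rintro a b ⟨i, η, hf, ⟨rfl, rfl⟩ | ⟨rfl, rfl⟩⟩
    · exact hadj η i hf
    · exact (hadj η i hf).symm
  edge_vert := by
    rintro a b ⟨i, η, hf, ⟨rfl, rfl⟩ | ⟨rfl, rfl⟩⟩
    · exact ⟨η, rfl⟩
    · exact ⟨Function.update η i true, rfl⟩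
  symm := by
    constructor
    rintro a b ⟨i, η, hf, h⟩
    exact ⟨i, η, hf, h.symm⟩

noncomputable def cubeIso (G : SimpleGraph V) (w : (Fin m → Bool) → V)
    (hw : Function.Injective w)
    (hadj : ∀ (η : Fin m → Bool) (i : Fin m), η i = false →
      G.Adj (w η) (w (Function.update η i true))) :
    gridGraph (fun _ : Fin m => (2 : ℕ)) ≃g (cubeSubgraph G w hadj).coe where
  toEquiv := Equiv.ofBijective
    (fun t => (⟨w (fun i => finTwoEquiv (t i)), ⟨_, rfl⟩⟩ : (cubeSubgraph G w hadj).verts))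
    (by
      constructor
      · intro t s h
        have := hw (Subtype.ext_iff.mp h)
        funext i
        exact finTwoEquiv.injective (congrFun this i)
      · rintro ⟨a, η, rfl⟩
        exact ⟨fun i => finTwoEquiv.symm (η i), by simp⟩)
  map_rel_iff' := by
    intro t s
    show (cubeSubgraph G w hadj).Adj (w fun i => finTwoEquiv (t i)) (w fun i => finTwoEquiv (s i))
      ↔ (gridGraph _).Adj t s
    have h1 : (cubeSubgraph G w hadj).Adj (w fun i => finTwoEquiv (t i))
        (w fun i => finTwoEquiv (s i)) ↔
        ∃ i : Fin m, finTwoEquiv (t i) ≠ finTwoEquiv (s i) ∧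
          ∀ j, j ≠ i → finTwoEquiv (t j) = finTwoEquiv (s j) := by
      rw [← differ_one_iff]
      constructor
      · rintro ⟨i, η₀, hf, ⟨ha, hb⟩ | ⟨ha, hb⟩⟩
        · exact ⟨i, η₀, hf, Or.inl ⟨funext_iff.mpr fun j => congrFun (hw ha) j,
            funext_iff.mpr fun j => congrFun (hw hb) j⟩⟩
        · exact ⟨i, η₀, hf, Or.inr ⟨funext_iff.mpr fun j => congrFun (hw ha) j,
            funext_iff.mpr fun j => congrFun (hw hb) j⟩⟩
      · rintro ⟨i, η₀, hf, ⟨ha, hb⟩ | ⟨ha, hb⟩⟩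
        · exact ⟨i, η₀, hf, Or.inl ⟨congrArg w ha, congrArg w hb⟩⟩
        · exact ⟨i, η₀, hf, Or.inr ⟨congrArg w ha, congrArg w hb⟩⟩
    rw [h1]
    constructor
    · rintro ⟨i, hne, hj⟩
      refine ⟨i, ?_, fun j hj' => finTwoEquiv.injective (hj j hj')⟩
      have hne' : t i ≠ s i := fun h => hne (by rw [h])
      have h2 : (t i : ℕ) < 2 := (t i).isLt
      have h3 : (s i : ℕ) < 2 := (s i).isLt
      have h4 : (t i : ℕ) ≠ (s i : ℕ) := fun h => hne' (Fin.val_injective h)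
      omega
    · rintro ⟨i, hne, hj⟩
      refine ⟨i, fun h => ?_, fun j hj' => by rw [hj j hj']⟩
      have := finTwoEquiv.injective h
      rcases hne with h' | h' <;> rw [this] at h' <;> omega

lemma cube_edgeSet (G : SimpleGraph V) [DecidableEq V] (w : (Fin m → Bool) → V)
    (hadj : ∀ (η : Fin m → Bool) (i : Fin m), η i = false →
      G.Adj (w η) (w (Function.update η i true))) :
    (cubeSubgraph G w hadj).edgeSet =
      ↑((Finset.univ.filter (fun p : Fin m × (Fin m → Bool) => p.2 p.1 = false)).image
        (fun p => s(w p.2, w (Function.update p.2 p.1 true)))) := by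
  ext e
  induction e with
  | h a b =>
    simp only [SimpleGraph.Subgraph.mem_edgeSet, Finset.coe_image, Set.mem_image,
      Finset.mem_coe, Finset.mem_filter, Finset.mem_univ, true_and]
    constructor
    · rintro ⟨i, η, hf, h⟩
      refine ⟨(i, η), hf, ?_⟩
      rcases h with ⟨rfl, rfl⟩ | ⟨rfl, rfl⟩
      · rfl
      · exact Sym2.eq_swap
    · rintro ⟨⟨i, η⟩, hf, he⟩
      rw [Sym2.eq_iff] at he
      rcases he with ⟨h1, h2⟩ | ⟨h1, h2⟩
      · exact ⟨i, η, hf, Or.inl ⟨h1.symm, h2.symm⟩⟩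
      · exact ⟨i, η, hf, Or.inr ⟨h1.symm, h2.symm⟩⟩

lemma cube_inj (G : SimpleGraph V) (w : (Fin m → Bool) → V) (hw : Function.Injective w) :
    ∀ p ∈ (Finset.univ.filter (fun p : Fin m × (Fin m → Bool) => p.2 p.1 = false)),
    ∀ q ∈ (Finset.univ.filter (fun p : Fin m × (Fin m → Bool) => p.2 p.1 = false)),
      (fun p : Fin m × (Fin m → Bool) => s(w p.2, w (Function.update p.2 p.1 true))) p =
      (fun p : Fin m × (Fin m → Bool) => s(w p.2, w (Function.update p.2 p.1 true))) q →
      p = q := by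
  rintro ⟨i, η⟩ hp ⟨j, μ⟩ hq h
  simp only [Finset.mem_filter, Finset.mem_univ, true_and] at hp hq
  simp only [Sym2.eq_iff, hw.eq_iff] at h
  rcases h with ⟨h1, h2⟩ | ⟨h1, h2⟩
  · subst h1
    have hij : i = j := by
      by_contra hne
      have h3 := congrFun h2 i
      rw [Function.update_self, Function.update_of_ne hne, hp] at h3
      exact Bool.noConfusion h3
    subst hij; rfl
  · exfalso
    have hμi : μ i = true := by rw [← h2, Function.update_self]
    rcases eq_or_ne i j with rfl | hne
    · rw [hq] at hμi; exact Bool.noConfusion hμi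
    · have h3 := congrFun h1 i
      rw [Function.update_of_ne hne, hμi, hp] at h3
      exact Bool.noConfusion h3

lemma cube_magic_sum [DecidableEq V] (G : SimpleGraph V)
    (gtil : Sym2 V → ℤ) (S' : ℤ)
    (hgtil : ∀ G' : G.Subgraph, Nonempty (G'.coe ≃g gridGraph (fun _ : Fin m => (2 : ℕ))) →
      ∑ᶠ e ∈ G'.edgeSet, gtil e = S')
    (w : (Fin m → Bool) → V) (hw : Function.Injective w)
    (hadj : ∀ (η : Fin m → Bool) (i : Fin m), η i = false →
      G.Adj (w η) (w (Function.update η i true))) :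
    ∑ i : Fin m, ∑ η ∈ Finset.univ.filter (fun η : Fin m → Bool => η i = false),
      gtil s(w η, w (Function.update η i true)) = S' := by
  have h1 := hgtil (cubeSubgraph G w hadj) ⟨(cubeIso G w hw hadj).symm⟩
  rw [cube_edgeSet, finsum_mem_coe_finset, Finset.sum_image (cube_inj G w hw)] at h1
  rw [← h1, Finset.sum_filter, Fintype.sum_prod_type]
  exact Finset.sum_congr rfl fun i _ => (Finset.sum_filter _ _)

lemma card_filter_eq_bool (i : Fin m) :
    (Finset.univ.filter (fun η : Fin m → Bool => η i = false)).card = 2 ^ (m - 1) := by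
  have hbij : (Finset.univ.filter (fun η : Fin m → Bool => η i = false)).card =
      (Finset.univ.filter (fun η : Fin m → Bool => η i = true)).card := by
    refine Finset.card_bij' (fun η _ => Function.update η i true)
      (fun η _ => Function.update η i false) ?_ ?_ ?_ ?_
    · intro η hη
      simp only [Finset.mem_filter, Finset.mem_univ, true_and] at hη ⊢
      exact Function.update_self i true η
    · intro η hη
      simp only [Finset.mem_filter, Finset.mem_univ, true_and] at hη ⊢
      exact Function.update_self i false η
    · intro η hη
      simp only [Finset.mem_filter, Finset.mem_univ, true_and] at hη
      show Function.update (Function.update η i true) i false = η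
      rw [Function.update_idem, ← hη, Function.update_eq_self]
    · intro η hη
      simp only [Finset.mem_filter, Finset.mem_univ, true_and] at hη
      show Function.update (Function.update η i false) i true = η
      rw [Function.update_idem, ← hη, Function.update_eq_self]
  have hpart := Finset.card_filter_add_card_filter_not
    (s := (Finset.univ : Finset (Fin m → Bool))) (p := fun η => η i = false)
  have hneg : (Finset.univ.filter (fun η : Fin m → Bool => ¬ η i = false)) =
      (Finset.univ.filter (fun η : Fin m → Bool => η i = true)) := by
    apply Finset.filter_congr
    intro η _
    simp
  rw [hneg] at hpart
  have hcard : (Finset.univ : Finset (Fin m → Bool)).card = 2 ^ m := by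
    rw [Finset.card_univ]
    simp [Fintype.card_fun]
  have hm : 1 ≤ m := i.pos
  have hpow : 2 ^ m = 2 ^ (m - 1) * 2 := by
    rw [← pow_succ, Nat.sub_add_cancel hm]
  have h2 : (Finset.univ.filter (fun η : Fin m → Bool => η i = false)).card * 2 =
      2 ^ (m - 1) * 2 := by
    rw [mul_two]
    nth_rewrite 2 [hbij]
    rw [hpart, hcard, hpow]
  exact Nat.eq_of_mul_eq_mul_right (by norm_num) h2

lemma filter_parity_half (s : Finset (Fin m → Bool)) (P : (Fin m → Bool) → Prop)
    [DecidablePred P] (z : Fin m)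
    (hmem : ∀ η ∈ s, Function.update η z (!η z) ∈ s)
    (hflip : ∀ η ∈ s, (P (Function.update η z (!η z)) ↔ ¬ P η)) :
    (s.filter P).card = (s.filter (fun η => ¬ P η)).card := by
  have hinv : ∀ η : Fin m → Bool,
      Function.update (Function.update η z (!η z)) z (!(Function.update η z (!η z)) z) = η := by
    intro η
    rw [Function.update_self, Function.update_idem, Bool.not_not, Function.update_eq_self]
  refine Finset.card_bij' (fun η _ => Function.update η z (!η z))
    (fun η _ => Function.update η z (!η z)) ?_ ?_ ?_ ?_
  · intro η hη
    rw [Finset.mem_filter] at hη ⊢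
    refine ⟨hmem η hη.1, fun hP => ?_⟩
    exact (hflip η hη.1).mp hP hη.2
  · intro η hη
    rw [Finset.mem_filter] at hη ⊢
    exact ⟨hmem η hη.1, (hflip η hη.1).mpr hη.2⟩
  · intro η hη
    exact hinv η
  · intro η hη
    exact hinv η

lemma sum_range_alt (N : ℕ) :
    ∑ k ∈ Finset.range N, (if Odd (k + 1) then (1 : ℤ) else -1) =
      if Even N then 0 else 1 := by
  induction N with
  | zero => simp
  | succ N ih =>
    rw [Finset.sum_range_succ, ih]
    rcases Nat.even_or_odd N with h | h
    · rw [if_pos h, if_pos h.add_one, if_neg (by rw [Nat.even_add_one]; exact fun hc => hc h)]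
      norm_num
    · have hE : ¬ Even N := Nat.not_even_iff_odd.mpr h
      have h1 : ¬ Odd (N + 1) := by
        rw [Nat.not_odd_iff_even, Nat.even_add_one]; exact fun hc => hE hc
      rw [if_neg hE, if_neg h1, if_pos (Nat.even_add_one.mpr hE)]
      norm_num

lemma flip_sum_aux {m r : ℕ} (h : r ≤ m) (hr : 0 < r) (z : Fin m) (hz : (z : ℕ) = 0)
    (η : Fin m → Bool) :
    (∑ j : Fin r, (if (Function.update η z (!η z)) (Fin.castLE h j) then (1 : ℕ) else 0)) +
      (if η z then 1 else 0) =
    (∑ j : Fin r, (if η (Fin.castLE h j) then (1 : ℕ) else 0)) + (if !η z then 1 else 0) := by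
  have hj0 : (⟨0, hr⟩ : Fin r) ∈ (Finset.univ : Finset (Fin r)) := Finset.mem_univ _
  rw [← Finset.add_sum_erase _ _ hj0, ← Finset.add_sum_erase _ _ hj0]
  have hcz : Fin.castLE h (⟨0, hr⟩ : Fin r) = z := Fin.val_injective (by simp [hz])
  have herase : ∑ j ∈ Finset.univ.erase (⟨0, hr⟩ : Fin r),
      (if (Function.update η z (!η z)) (Fin.castLE h j) then (1 : ℕ) else 0) =
      ∑ j ∈ Finset.univ.erase (⟨0, hr⟩ : Fin r),
      (if η (Fin.castLE h j) then (1 : ℕ) else 0) := by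
    refine Finset.sum_congr rfl fun j hj => ?_
    have hjne : Fin.castLE h j ≠ z := by
      intro hh
      apply (Finset.mem_erase.mp hj).1
      apply Fin.val_injective
      have := congrArg Fin.val hh
      simpa [hz] using this
    rw [Function.update_of_ne hjne]
  rw [hcz, herase, Function.update_self]
  cases hb : η z <;> simp [hb] <;> ring

lemma flip_parity_aux {m r : ℕ} (h : r ≤ m) (hr : 0 < r) (z : Fin m) (hz : (z : ℕ) = 0)
    (K : ℕ) (η : Fin m → Bool) :
    (Odd (K + ∑ j : Fin r,
        (if (Function.update η z (!η z)) (Fin.castLE h j) then (1 : ℕ) else 0)) ↔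
      ¬ Odd (K + ∑ j : Fin r, (if η (Fin.castLE h j) then (1 : ℕ) else 0))) := by
  have h5 := flip_sum_aux h hr z hz η
  have hpq : (if η z then (1 : ℕ) else 0) + (if !η z then 1 else 0) = 1 := by
    cases hb : η z <;> simp [hb]
  simp only [Nat.odd_iff]
  omega

end CubeAux

/-- with `g` defined on the edges of `Grid(n 0, …, n (d-1))` in the first
`d-1` directions via a `Q_{d-1}`-magic edge labeling `g̃` (magic sum `S'`) plus `(x_d-1)M`
or `(n_d-x_d)M` according to the parity of the direction `i` (when `d` is odd, or `d` even
and `i ≤ d-2`) or of `x₁+⋯+x_{d-2}` (when `d` is even and `i = d-1`), for every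
`(x₁,…,x_d) ∈ [n₁-1] × ⋯ × [n_d-1]` and every `ε ∈ {0,1}`, the labels of the
`(d-1)·2^{d-2}` edges of the subcube `{x+η : η ∈ {0,1}^d}` both of whose endpoints have
last coordinate `x_d + ε` sum to `S' + (d-1)·2^{d-3}(n_d-1)M`. -/
theorem induction_step_layer_edges_sum (d : ℕ) (hd : 3 ≤ d) (n : Fin d → ℕ)
    (hn : ∀ i, 2 ≤ n i) (M : ℕ)
    (hM : M = (gridGraph fun i : Fin (d - 1) => n (restrIdx d i)).edgeSet.ncard)
    (gtil : Sym2 (∀ i : Fin (d - 1), Fin (n (restrIdx d i))) → ℤ) (S' : ℤ)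
    (hgtil : IsMagicEdgeLabeling (gridGraph fun i : Fin (d - 1) => n (restrIdx d i))
      (gridGraph fun _ : Fin (d - 1) => (2 : ℕ)) gtil S')
    (g : Sym2 (∀ i, Fin (n i)) → ℤ)
    (hghor : ∀ (x y : ∀ i, Fin (n i)) (i : Fin (d - 1)),
      (x (restrIdx d i) : ℕ) + 1 = (y (restrIdx d i) : ℕ) →
      (∀ j, j ≠ restrIdx d i → x j = y j) →
      g s(x, y) = gtil s(restrict x, restrict y) +
        (if Odd d ∨ (i : ℕ) + 1 ≤ d - 2 then
          (if Odd ((i : ℕ) + 1) then ((x (lastIdx d (by omega)) : ℕ) : ℤ) * M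
          else
            ((n (lastIdx d (by omega)) : ℤ) -
              (((x (lastIdx d (by omega)) : ℕ) : ℤ) + 1)) * M)
        else
          (if Odd (∑ j : Fin (d - 2), ((x (Fin.castLE (Nat.sub_le d 2) j) : ℕ) + 1)) then
            ((x (lastIdx d (by omega)) : ℕ) : ℤ) * M
          else
            ((n (lastIdx d (by omega)) : ℤ) -
              (((x (lastIdx d (by omega)) : ℕ) : ℤ) + 1)) * M)))
    (x : Fin d → ℕ) (hx : ∀ i, 1 ≤ x i ∧ x i ≤ n i - 1) (ε : ℕ) (hε : ε ≤ 1)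
    (v : (Fin (d - 1) → Bool) → ∀ j, Fin (n j))
    (hv : ∀ η j, ((v η) (restrIdx d j) : ℕ) + 1 = x (restrIdx d j) + (if η j then 1 else 0))
    (hvd : ∀ η, ((v η) (lastIdx d (by omega)) : ℕ) + 1 = x (lastIdx d (by omega)) + ε) :
    ∑ i : Fin (d - 1),
        ∑ η ∈ Finset.univ.filter (fun η : Fin (d - 1) → Bool => η i = false),
          g s(v η, v (Function.update η i true))
      = S' + ((d : ℤ) - 1) * 2 ^ (d - 3) * ((n (lastIdx d (by omega)) : ℤ) - 1) * M := by
  classical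
  have hd1 : 1 ≤ d := by omega
  have h2le : d - 2 ≤ d - 1 := by omega
  show _ = S' + ((d : ℤ) - 1) * 2 ^ (d - 3) * ((n (lastIdx d hd1) : ℤ) - 1) * M
  -- injectivity of the cube vertex map
  have hwinj : Function.Injective (fun η : Fin (d - 1) → Bool => restrict (v η)) := by
    intro η μ h
    funext i
    have h1 := hv η i
    have h2 := hv μ i
    have h3 : (v η (restrIdx d i) : ℕ) = (v μ (restrIdx d i) : ℕ) :=
      congrArg Fin.val (congrFun h i)
    cases hη : η i <;> cases hμ : μ i
    · rfl
    · exfalso; rw [hη] at h1; rw [hμ] at h2; simp at h1 h2; omega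
    · exfalso; rw [hη] at h1; rw [hμ] at h2; simp at h1 h2; omega
    · rfl
  -- the cube edges are edges of the grid
  have hadjw : ∀ (η : Fin (d - 1) → Bool) (i : Fin (d - 1)), η i = false →
      (gridGraph fun i : Fin (d - 1) => n (restrIdx d i)).Adj
        ((fun η : Fin (d - 1) → Bool => restrict (v η)) η)
        ((fun η : Fin (d - 1) → Bool => restrict (v η)) (Function.update η i true)) := by
    intro η i hf
    have h1 := hv η i
    have h2 := hv (Function.update η i true) i
    rw [hf] at h1
    rw [Function.update_self] at h2
    simp only [Bool.false_eq_true, if_false, if_true] at h1 h2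
    refine ⟨i, Or.inl ?_, ?_⟩
    · show (v η (restrIdx d i) : ℕ) + 1 = (v (Function.update η i true) (restrIdx d i) : ℕ)
      omega
    · intro j hj
      have h3 := hv η j
      have h4 := hv (Function.update η i true) j
      rw [Function.update_of_ne hj] at h4
      show v η (restrIdx d j) = v (Function.update η i true) (restrIdx d j)
      apply Fin.val_injective
      cases hb : η j <;> rw [hb] at h3 h4 <;> simp at h3 h4 <;> omega
  -- decompose each label
  have key : ∀ (i : Fin (d - 1)) (η : Fin (d - 1) → Bool), η i = false →
      g s(v η, v (Function.update η i true)) =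
        gtil s(restrict (v η), restrict (v (Function.update η i true))) +
        (if Odd d ∨ (i : ℕ) + 1 ≤ d - 2 then
          (if Odd ((i : ℕ) + 1) then ((v η (lastIdx d hd1) : ℕ) : ℤ) * M
          else ((n (lastIdx d hd1) : ℤ) - (((v η (lastIdx d hd1) : ℕ) : ℤ) + 1)) * M)
        else
          (if Odd (∑ j : Fin (d - 2), ((v η (Fin.castLE (Nat.sub_le d 2) j) : ℕ) + 1)) then
            ((v η (lastIdx d hd1) : ℕ) : ℤ) * M
          else ((n (lastIdx d hd1) : ℤ) - (((v η (lastIdx d hd1) : ℕ) : ℤ) + 1)) * M)) := by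
    intro i η hf
    apply hghor
    · have h1 := hv η i
      have h2 := hv (Function.update η i true) i
      rw [hf] at h1
      rw [Function.update_self] at h2
      simp only [Bool.false_eq_true, if_false, if_true] at h1 h2
      omega
    · intro j hj
      by_cases hjd : (j : ℕ) = d - 1
      · have hjL : j = lastIdx d hd1 := Fin.val_injective hjd
        subst hjL
        have e1 : (v η (lastIdx d hd1) : ℕ) + 1 = x (lastIdx d hd1) + ε := hvd η
        have e2 : (v (Function.update η i true) (lastIdx d hd1) : ℕ) + 1 =
            x (lastIdx d hd1) + ε := hvd (Function.update η i true)
        exact Fin.val_injective (by omega)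
      · have hlt : (j : ℕ) < d - 1 := by have := j.isLt; omega
        have hjj : j = restrIdx d ⟨(j : ℕ), hlt⟩ := Fin.val_injective rfl
        have hne : (⟨(j : ℕ), hlt⟩ : Fin (d - 1)) ≠ i := by
          intro h
          apply hj
          rw [hjj, h]
        have h3 := hv η ⟨(j : ℕ), hlt⟩
        have h4 := hv (Function.update η i true) ⟨(j : ℕ), hlt⟩
        rw [Function.update_of_ne hne] at h4
        rw [hjj]
        apply Fin.val_injective
        cases hb : η ⟨(j : ℕ), hlt⟩ <;> rw [hb] at h3 h4 <;> simp at h3 h4 <;> omega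
  -- the constant last coordinate
  have hxL1 : 1 ≤ x (lastIdx d hd1) := (hx (lastIdx d hd1)).1
  obtain ⟨c, hcval⟩ : ∃ c : ℕ, c + 1 = x (lastIdx d hd1) + ε :=
    ⟨x (lastIdx d hd1) + ε - 1, by omega⟩
  have hc : ∀ η : Fin (d - 1) → Bool, (v η (lastIdx d hd1) : ℕ) = c := by
    intro η
    have e1 : (v η (lastIdx d hd1) : ℕ) + 1 = x (lastIdx d hd1) + ε := hvd η
    omega
  set a : ℤ := (c : ℤ) * M with hadef
  set b : ℤ := ((n (lastIdx d hd1) : ℤ) - ((c : ℤ) + 1)) * M with hbdef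
  -- the signed sum over directions vanishes
  have hσ : ∑ i : Fin (d - 1),
      (if Odd d ∨ (i : ℕ) + 1 ≤ d - 2 then (if Odd ((i : ℕ) + 1) then (1 : ℤ) else -1) else 0)
      = 0 := by
    rw [Fin.sum_univ_eq_sum_range
      (fun k => if Odd d ∨ k + 1 ≤ d - 2 then (if Odd (k + 1) then (1 : ℤ) else -1) else 0)]
    by_cases hOdd : Odd d
    · have hEv : Even (d - 1) := by
        have := Nat.odd_iff.mp hOdd
        exact Nat.even_iff.mpr (by omega)
      rw [Finset.sum_congr rfl (fun k _ => if_pos (Or.inl hOdd)), sum_range_alt, if_pos hEv]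
    · have hrw : d - 1 = (d - 2) + 1 := by omega
      rw [hrw, Finset.sum_range_succ]
      have hlast : (if Odd d ∨ (d - 2) + 1 ≤ d - 2 then
          (if Odd ((d - 2) + 1) then (1 : ℤ) else -1) else 0) = 0 := by
        rw [if_neg]
        rintro (h | h)
        · exact hOdd h
        · omega
      have hrest : ∀ k ∈ Finset.range (d - 2),
          (if Odd d ∨ k + 1 ≤ d - 2 then (if Odd (k + 1) then (1 : ℤ) else -1) else 0) =
          (if Odd (k + 1) then (1 : ℤ) else -1) := by
        intro k hk
        rw [Finset.mem_range] at hk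
        exact if_pos (Or.inr (by omega))
      have hEv : Even (d - 2) := by
        have := Nat.even_iff.mp (Nat.not_odd_iff_even.mp hOdd)
        exact Nat.even_iff.mpr (by omega)
      rw [Finset.sum_congr rfl hrest, sum_range_alt, hlast, add_zero, if_pos hEv]
  -- inner sums
  have hinner : ∀ i : Fin (d - 1),
      ∑ η ∈ Finset.univ.filter (fun η : Fin (d - 1) → Bool => η i = false),
        (if Odd d ∨ (i : ℕ) + 1 ≤ d - 2 then
          (if Odd ((i : ℕ) + 1) then ((v η (lastIdx d hd1) : ℕ) : ℤ) * M
          else ((n (lastIdx d hd1) : ℤ) - (((v η (lastIdx d hd1) : ℕ) : ℤ) + 1)) * M)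
        else
          (if Odd (∑ j : Fin (d - 2), ((v η (Fin.castLE (Nat.sub_le d 2) j) : ℕ) + 1)) then
            ((v η (lastIdx d hd1) : ℕ) : ℤ) * M
          else ((n (lastIdx d hd1) : ℤ) - (((v η (lastIdx d hd1) : ℕ) : ℤ) + 1)) * M))
      = 2 ^ (d - 3) * (a + b) + 2 ^ (d - 3) * (a - b) *
          (if Odd d ∨ (i : ℕ) + 1 ≤ d - 2 then (if Odd ((i : ℕ) + 1) then (1 : ℤ) else -1)
           else 0) := by
    intro i
    have hpow23 : (2 : ℤ) ^ (d - 2) = 2 * 2 ^ (d - 3) := by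
      rw [← pow_succ']
      congr 1
      omega
    by_cases hcond : Odd d ∨ (i : ℕ) + 1 ≤ d - 2
    · have hC : ∀ η ∈ Finset.univ.filter (fun η : Fin (d - 1) → Bool => η i = false),
          (if Odd d ∨ (i : ℕ) + 1 ≤ d - 2 then
            (if Odd ((i : ℕ) + 1) then ((v η (lastIdx d hd1) : ℕ) : ℤ) * M
            else ((n (lastIdx d hd1) : ℤ) - (((v η (lastIdx d hd1) : ℕ) : ℤ) + 1)) * M)
          else
            (if Odd (∑ j : Fin (d - 2), ((v η (Fin.castLE (Nat.sub_le d 2) j) : ℕ) + 1)) then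
              ((v η (lastIdx d hd1) : ℕ) : ℤ) * M
            else ((n (lastIdx d hd1) : ℤ) - (((v η (lastIdx d hd1) : ℕ) : ℤ) + 1)) * M))
          = (if Odd ((i : ℕ) + 1) then a else b) := by
        intro η _
        rw [if_pos hcond, hc η, hadef, hbdef]
      rw [Finset.sum_congr rfl hC, Finset.sum_const, card_filter_eq_bool i, if_pos hcond]
      have hd2 : d - 1 - 1 = d - 2 := by omega
      rw [hd2, nsmul_eq_mul]
      push_cast
      by_cases hodd : Odd ((i : ℕ) + 1)
      · rw [if_pos hodd, if_pos hodd, hpow23]; ring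
      · rw [if_neg hodd, if_neg hodd, hpow23]; ring
    · have hOdd : ¬ Odd d := fun h => hcond (Or.inl h)
      have hid : (i : ℕ) = d - 2 := by
        have h6 : ¬ ((i : ℕ) + 1 ≤ d - 2) := fun h => hcond (Or.inr h)
        have := i.isLt
        omega
      rw [if_neg hcond, mul_zero, add_zero]
      obtain ⟨K, hKdef⟩ : ∃ K : ℕ, K = ∑ j : Fin (d - 2), x (restrIdx d (Fin.castLE h2le j)) :=
        ⟨_, rfl⟩
      obtain ⟨N, hNdef⟩ : ∃ N : (Fin (d - 1) → Bool) → ℕ,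
          N = fun η => ∑ j : Fin (d - 2), (if η (Fin.castLE h2le j) then 1 else 0) :=
        ⟨_, rfl⟩
      have hT : ∀ η : Fin (d - 1) → Bool,
          (∑ j : Fin (d - 2), ((v η (Fin.castLE (Nat.sub_le d 2) j) : ℕ) + 1)) = K + N η := by
        intro η
        simp only [hKdef, hNdef]
        rw [← Finset.sum_add_distrib]
        exact Finset.sum_congr rfl fun j _ => hv η (Fin.castLE h2le j)
      have hC : ∀ η ∈ Finset.univ.filter (fun η : Fin (d - 1) → Bool => η i = false),
          (if Odd d ∨ (i : ℕ) + 1 ≤ d - 2 then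
            (if Odd ((i : ℕ) + 1) then ((v η (lastIdx d hd1) : ℕ) : ℤ) * M
            else ((n (lastIdx d hd1) : ℤ) - (((v η (lastIdx d hd1) : ℕ) : ℤ) + 1)) * M)
          else
            (if Odd (∑ j : Fin (d - 2), ((v η (Fin.castLE (Nat.sub_le d 2) j) : ℕ) + 1)) then
              ((v η (lastIdx d hd1) : ℕ) : ℤ) * M
            else ((n (lastIdx d hd1) : ℤ) - (((v η (lastIdx d hd1) : ℕ) : ℤ) + 1)) * M))
          = (if Odd (K + N η) then a else b) := by
        intro η _
        rw [if_neg hcond, hT η, hc η, hadef, hbdef]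
      rw [Finset.sum_congr rfl hC, Finset.sum_ite, Finset.sum_const, Finset.sum_const]
      obtain ⟨z, hz0⟩ : ∃ z : Fin (d - 1), (z : ℕ) = 0 := ⟨⟨0, by omega⟩, rfl⟩
      have hiz : i ≠ z := by
        intro h
        have h7 := congrArg Fin.val h
        omega
      have hmem : ∀ η ∈ Finset.univ.filter (fun η : Fin (d - 1) → Bool => η i = false),
          Function.update η z (!η z) ∈
            Finset.univ.filter (fun η : Fin (d - 1) → Bool => η i = false) := by
        intro η hη
        rw [Finset.mem_filter] at hη ⊢
        exact ⟨Finset.mem_univ _, by rw [Function.update_of_ne hiz]; exact hη.2⟩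
      have hflip : ∀ η ∈ Finset.univ.filter (fun η : Fin (d - 1) → Bool => η i = false),
          ((fun η => Odd (K + N η)) (Function.update η z (!η z)) ↔
            ¬ (fun η => Odd (K + N η)) η) := by
        intro η _
        simp only [hNdef]
        exact flip_parity_aux h2le (by omega) z hz0 K η
      have he11 : d - 1 - 1 = d - 2 := by omega
      have hpow23n : (2 : ℕ) ^ (d - 2) = 2 ^ (d - 3) * 2 := by
        rw [← pow_succ]
        congr 1
        omega
      have hS0card : (Finset.univ.filter (fun η : Fin (d - 1) → Bool => η i = false)).card
          = 2 ^ (d - 2) := by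
        rw [card_filter_eq_bool i, he11]
      have hcards := filter_parity_half
        (Finset.univ.filter (fun η : Fin (d - 1) → Bool => η i = false))
        (fun η => Odd (K + N η)) z hmem hflip
      have htot := Finset.card_filter_add_card_filter_not
        (s := Finset.univ.filter (fun η : Fin (d - 1) → Bool => η i = false))
        (p := fun η => Odd (K + N η))
      have hcardP : ((Finset.univ.filter (fun η : Fin (d - 1) → Bool => η i = false)).filter
          (fun η => Odd (K + N η))).card = 2 ^ (d - 3) := by
        apply Nat.eq_of_mul_eq_mul_right (show 0 < 2 by norm_num)
        rw [mul_two]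
        nth_rewrite 2 [hcards]
        rw [htot, hS0card, hpow23n]
      have hcardNP : ((Finset.univ.filter (fun η : Fin (d - 1) → Bool => η i = false)).filter
          (fun η => ¬ Odd (K + N η))).card = 2 ^ (d - 3) := by
        rw [← hcards]
        exact hcardP
      rw [hcardP, hcardNP]
      push_cast
      ring
  -- the magic labeling sums to S' on the cube
  have hS' : ∑ i : Fin (d - 1),
      ∑ η ∈ Finset.univ.filter (fun η : Fin (d - 1) → Bool => η i = false),
        gtil s(restrict (v η), restrict (v (Function.update η i true))) = S' :=
    cube_magic_sum (gridGraph fun i : Fin (d - 1) => n (restrIdx d i)) gtil S' hgtil.2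
      (fun η => restrict (v η)) hwinj hadjw
  have hcast : ((d - 1 : ℕ) : ℤ) = (d : ℤ) - 1 := by
    rw [Nat.cast_sub hd1, Nat.cast_one]
  -- assemble
  calc ∑ i : Fin (d - 1),
        ∑ η ∈ Finset.univ.filter (fun η : Fin (d - 1) → Bool => η i = false),
          g s(v η, v (Function.update η i true))
      = ∑ i : Fin (d - 1),
        ∑ η ∈ Finset.univ.filter (fun η : Fin (d - 1) → Bool => η i = false),
          (gtil s(restrict (v η), restrict (v (Function.update η i true))) +
          (if Odd d ∨ (i : ℕ) + 1 ≤ d - 2 then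
            (if Odd ((i : ℕ) + 1) then ((v η (lastIdx d hd1) : ℕ) : ℤ) * M
            else ((n (lastIdx d hd1) : ℤ) - (((v η (lastIdx d hd1) : ℕ) : ℤ) + 1)) * M)
          else
            (if Odd (∑ j : Fin (d - 2), ((v η (Fin.castLE (Nat.sub_le d 2) j) : ℕ) + 1)) then
              ((v η (lastIdx d hd1) : ℕ) : ℤ) * M
            else ((n (lastIdx d hd1) : ℤ) - (((v η (lastIdx d hd1) : ℕ) : ℤ) + 1)) * M))) := by
        refine Finset.sum_congr rfl fun i _ => Finset.sum_congr rfl fun η hη => ?_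
        exact key i η (Finset.mem_filter.mp hη).2
    _ = (∑ i : Fin (d - 1),
          ∑ η ∈ Finset.univ.filter (fun η : Fin (d - 1) → Bool => η i = false),
            gtil s(restrict (v η), restrict (v (Function.update η i true)))) +
        ∑ i : Fin (d - 1),
          ∑ η ∈ Finset.univ.filter (fun η : Fin (d - 1) → Bool => η i = false),
          (if Odd d ∨ (i : ℕ) + 1 ≤ d - 2 then
            (if Odd ((i : ℕ) + 1) then ((v η (lastIdx d hd1) : ℕ) : ℤ) * M
            else ((n (lastIdx d hd1) : ℤ) - (((v η (lastIdx d hd1) : ℕ) : ℤ) + 1)) * M)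
          else
            (if Odd (∑ j : Fin (d - 2), ((v η (Fin.castLE (Nat.sub_le d 2) j) : ℕ) + 1)) then
              ((v η (lastIdx d hd1) : ℕ) : ℤ) * M
            else ((n (lastIdx d hd1) : ℤ) - (((v η (lastIdx d hd1) : ℕ) : ℤ) + 1)) * M)) := by
        rw [← Finset.sum_add_distrib]
        exact Finset.sum_congr rfl fun i _ => Finset.sum_add_distrib
    _ = S' + ∑ i : Fin (d - 1),
          (2 ^ (d - 3) * (a + b) + 2 ^ (d - 3) * (a - b) *
          (if Odd d ∨ (i : ℕ) + 1 ≤ d - 2 then (if Odd ((i : ℕ) + 1) then (1 : ℤ) else -1)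
           else 0)) := by
        rw [hS']
        congr 1
        exact Finset.sum_congr rfl fun i _ => hinner i
    _ = S' + ((d : ℤ) - 1) * 2 ^ (d - 3) * ((n (lastIdx d hd1) : ℤ) - 1) * M := by
        rw [Finset.sum_add_distrib]
        have h2 : ∑ i : Fin (d - 1), 2 ^ (d - 3) * (a - b) *
            (if Odd d ∨ (i : ℕ) + 1 ≤ d - 2 then (if Odd ((i : ℕ) + 1) then (1 : ℤ) else -1)
             else 0) = 2 ^ (d - 3) * (a - b) * ∑ i : Fin (d - 1),
            (if Odd d ∨ (i : ℕ) + 1 ≤ d - 2 then (if Odd ((i : ℕ) + 1) then (1 : ℤ) else -1)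
             else 0) := by
          rw [Finset.mul_sum]
        rw [h2, hσ, mul_zero, add_zero, Finset.sum_const, Finset.card_univ, Fintype.card_fin,
          nsmul_eq_mul]
        have hab : a + b = ((n (lastIdx d hd1) : ℤ) - 1) * M := by
          rw [hadef, hbdef]; ring
        rw [hab, hcast]
        ring
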